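/- Let φ ∈ L^∞(𝕋) with Fourier coefficients φ̂. For μ, λ ∈ 𝕋, define the conjugation C_{μ,λ} on H²(𝔻) by (C_{μ,λ} f)(z) = μ · conj(f(λ·conj(z))). Then T_φ is C_{μ,λ}-symmetric (C_{μ,λ} T_φ C_{μ,λ} = T_φ*) if and only if φ̂(−n) = φ̂(n) λⁿ for all n ∈ ℤ. -/

import Mathlib

open scoped ComplexConjugate

/-- The Hardy space `H²(𝔻)`, identified with `ℓ²(ℕ, ℂ)` via `z^n ↦ e n`. -/
noncomputable abbrev HardySpace := lp (fun _ : ℕ => ℂ) 2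

/-- The standard basis vector `e j`, corresponding to `z^j`. -/
noncomputable def e (j : ℕ) : HardySpace := lp.single 2 j 1

/-- Ko–Lee characterization: for unimodular `μ, λ` and the conjugation
`(C_{μ,λ} f)(z) = μ conj(f(λ conj z))`, i.e. coefficientwise
`(C_{μ,λ} a)_k = μ · conj(a_k) · conj(λ)^k`, the Toeplitz operator `T_φ`
(acting on the basis by `(T_φ e_j)_m = φhat (m-j)`, `φhat` the square-summable Fourier
coefficient sequence of `φ ∈ L^∞(𝕋)`) satisfies `C_{μ,λ} T_φ C_{μ,λ} = T_φ*` if and only if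
`φhat (−n) = φhat n · λ^n` for all `n ∈ ℤ`. -/
theorem toeplitz_Cmulambda_symmetric_iff (μ lam : ℂ) (hμ : ‖μ‖ = 1) (hlam : ‖lam‖ = 1)
    (φhat : ℤ → ℂ) (hsq : Summable fun k => ‖φhat k‖ ^ 2)
    (T : HardySpace →L[ℂ] HardySpace)
    (hT : ∀ j m : ℕ, (T (e j)) m = φhat ((m : ℤ) - j))
    (C : HardySpace → HardySpace)
    (hC : ∀ (a : HardySpace) (k : ℕ), (C a) k = μ * conj (a k) * (conj lam) ^ k) :
    (∀ x, C (T (C x)) = ContinuousLinearMap.adjoint T x) ↔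
      ∀ n : ℤ, φhat (-n) = φhat n * lam ^ n := by
  have hμ1 : μ * conj μ = 1 := by
    rw [Complex.mul_conj]
    norm_cast
    rw [Complex.normSq_eq_norm_sq, hμ]; norm_num
  have hlam1 : lam * conj lam = 1 := by
    rw [Complex.mul_conj]
    norm_cast
    rw [Complex.normSq_eq_norm_sq, hlam]; norm_num
  have hlam0 : lam ≠ 0 := by
    intro h; rw [h] at hlam1; simp at hlam1
  have hclam : conj lam = lam⁻¹ := by
    field_simp
    linear_combination hlam1
  -- inner product with basis vector recovers the coefficient
  have inner_e : ∀ (k : ℕ) (x : HardySpace), (inner ℂ (e k) x : ℂ) = x k := by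
    intro k x
    rw [e, lp.inner_single_left]
    simp [RCLike.inner_apply]
  -- coefficients of T x as a sum
  have hTsum : ∀ (x : HardySpace) (k : ℕ),
      HasSum (fun j : ℕ => x j * φhat ((k : ℤ) - j)) ((T x) k) := by
    intro x k
    have hs : HasSum (fun j : ℕ => lp.single 2 j (x j)) x :=
      lp.hasSum_single ENNReal.ofNat_ne_top x
    have h2 := (hs.mapL T).mapL (innerSL ℂ (e k))
    simp only [innerSL_apply_apply] at h2
    rw [inner_e] at h2
    convert h2 using 2 with j
    · rfl
    have hsingle : lp.single 2 j (x j) = x j • e j := by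
      rw [e, ← lp.single_smul]
      norm_num
    rw [hsingle, map_smul, inner_e]
    simp [lp.coeFn_smul, hT j k, mul_comm]
  -- coefficients of adjoint T x
  have hadj : ∀ (x : HardySpace) (m : ℕ),
      HasSum (fun j : ℕ => conj (φhat ((j : ℤ) - m)) * x j)
        ((ContinuousLinearMap.adjoint T x) m) := by
    intro x m
    have h1 : ((ContinuousLinearMap.adjoint T x) m : ℂ)
        = inner ℂ (T (e m)) x := by
      rw [← inner_e m (ContinuousLinearMap.adjoint T x),
        ContinuousLinearMap.adjoint_inner_right]
    rw [h1]
    have h2 := lp.hasSum_inner (𝕜 := ℂ) (T (e m)) x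
    convert h2 using 2 with j
    · rfl
    rw [RCLike.inner_apply, hT m j, mul_comm]
  constructor
  · intro h n
    have key : ∀ j m : ℕ,
        lam ^ j * conj lam ^ m * conj (φhat ((m : ℤ) - j)) = conj (φhat ((j : ℤ) - m)) := by
      intro j m
      have hCe : C (e j) = (μ * conj lam ^ j) • e j := by
        apply lp.ext
        funext k
        rw [lp.coeFn_smul, Pi.smul_apply, hC]
        by_cases hk : k = j
        · subst hk
          rw [e, lp.single_apply_self]
          simp [smul_eq_mul]
        · rw [e, lp.single_apply_ne 2 j 1 hk]
          simp [smul_eq_mul]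
      have h1 := congrArg (fun v : HardySpace => (v : ∀ _ : ℕ, ℂ) m) (h (e j))
      simp only at h1
      rw [hCe, map_smul, hC] at h1
      rw [lp.coeFn_smul, Pi.smul_apply, smul_eq_mul, hT j m] at h1
      have h2 : ((ContinuousLinearMap.adjoint T (e j)) m : ℂ) = conj (φhat ((j : ℤ) - m)) := by
        rw [← inner_e m (ContinuousLinearMap.adjoint T (e j)),
          ContinuousLinearMap.adjoint_inner_right,
          show e j = lp.single 2 j (1:ℂ) from rfl, lp.inner_single_right,
          RCLike.inner_apply, hT m j, one_mul]
      rw [h2] at h1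
      rw [← h1]
      simp only [map_mul, map_pow, Complex.conj_conj]
      linear_combination (-(lam ^ j * (starRingEnd ℂ) lam ^ m *
        (starRingEnd ℂ) (φhat ((m:ℤ) - (j:ℤ))))) * hμ1
    have hkey := key n.toNat (-n).toNat
    have hjm : ((n.toNat : ℤ) - ((-n).toNat : ℤ)) = n := by omega
    have hmj : (((-n).toNat : ℤ) - (n.toNat : ℤ)) = -n := by omega
    rw [hjm, hmj] at hkey
    have hkey' := congrArg conj hkey
    simp only [map_mul, map_pow, Complex.conj_conj] at hkey'
    -- hkey' : conj lam ^ n.toNat * lam ^ (-n).toNat * φhat (-n) = φhat n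
    have hz : lam ^ n = lam ^ n.toNat * conj lam ^ (-n).toNat := by
      rw [hclam, inv_pow, ← zpow_natCast lam n.toNat, ← zpow_natCast lam (-n).toNat,
        ← zpow_neg, ← zpow_add₀ hlam0]
      congr 1
      omega
    rw [hz, ← hkey']
    rw [hclam, inv_pow]
    field_simp
    rw [one_div, mul_assoc, ← mul_pow, mul_inv_cancel₀ hlam0, one_pow, mul_one]
  · intro h x
    apply lp.ext
    funext m
    have h1 := hTsum (C x) m
    have h2 := ((h1.star).mul_left μ).mul_right (star lam ^ m)
    have term : ∀ j : ℕ,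
        μ * star ((C x : ∀ _ : ℕ, ℂ) j * φhat ((m : ℤ) - j)) * star lam ^ m
          = conj (φhat ((j : ℤ) - m)) * x j := by
      intro j
      rw [hC]
      have hn := h ((j : ℤ) - m)
      rw [show -((j : ℤ) - (m : ℤ)) = (m : ℤ) - j by ring] at hn
      rw [hn]
      simp only [← starRingEnd_apply, map_mul, map_pow, Complex.conj_conj, map_zpow₀]
      rw [hclam, inv_zpow, ← zpow_neg, show -((j : ℤ) - (m : ℤ)) = (m : ℤ) - j by ring,
        zpow_sub₀ hlam0, zpow_natCast, zpow_natCast, inv_pow]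
      have hj0 : (lam : ℂ) ^ j ≠ 0 := pow_ne_zero _ hlam0
      have hm0 : (lam : ℂ) ^ m ≠ 0 := pow_ne_zero _ hlam0
      field_simp
      linear_combination (x j * conj (φhat ((j : ℤ) - m))) * hμ1
    have h3 : HasSum (fun j : ℕ => conj (φhat ((j : ℤ) - m)) * x j)
        (μ * star ((T (C x) : ∀ _ : ℕ, ℂ) m) * star lam ^ m) := by
      have := h2
      simp only [term] at this
      exact this
    have h4 := hadj x m
    have h5 : ((C (T (C x)) : ∀ _ : ℕ, ℂ)) m
        = μ * star ((T (C x) : ∀ _ : ℕ, ℂ) m) * star lam ^ m := by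
      rw [hC]
      simp only [starRingEnd_apply]
    rw [h5, h3.unique h4]
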